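/- If e : L → C and e' : L → C' are two canonical extensions of a bounded lattice L, then there exists an order isomorphism φ : C → C' (a complete lattice isomorphism) such that φ ∘ e = e'. -/

import Mathlib

/-- An element `x` of a complete lattice is completely join-irreducible if
`x ∈ S` whenever `x = ⨆ S`. -/
def CompletelyJoinIrreducible {C : Type*} [CompleteLattice C] (x : C) : Prop :=
  ∀ S : Set C, x = sSup S → x ∈ S

/-- An element `y` of a complete lattice is completely meet-irreducible if
`y ∈ S` whenever `y = ⨅ S`. -/
def CompletelyMeetIrreducible {C : Type*} [CompleteLattice C] (y : C) : Prop :=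
  ∀ S : Set C, y = sInf S → y ∈ S

/-- `e : L → C` is a canonical extension of the bounded lattice `L`: an injective
bounded-lattice homomorphism into a complete lattice `C` which is dense and compact. -/
def IsCanonicalExtension {L C : Type*} [Lattice L] [BoundedOrder L] [CompleteLattice C]
    (e : L → C) : Prop :=
  Function.Injective e ∧
  (∀ a b : L, e (a ⊓ b) = e a ⊓ e b) ∧
  (∀ a b : L, e (a ⊔ b) = e a ⊔ e b) ∧
  e ⊥ = ⊥ ∧ e ⊤ = ⊤ ∧
  -- denseness
  (∀ u : C,
    u = sSup {v : C | ∃ S : Set L, v = sInf (e '' S) ∧ v ≤ u} ∧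
    u = sInf {v : C | ∃ T : Set L, v = sSup (e '' T) ∧ u ≤ v}) ∧
  -- compactness
  (∀ S T : Set L, sInf (e '' S) ≤ sSup (e '' T) →
    ∃ S' T' : Finset L, ↑S' ⊆ S ∧ ↑T' ⊆ T ∧ S'.inf id ≤ T'.sup id)

section Aux

variable {L C C' : Type*} [Lattice L] [BoundedOrder L] [CompleteLattice C] [CompleteLattice C']

lemma canExt_mono (e : L → C) (h : IsCanonicalExtension e) : Monotone e := by
  intro a b hab
  have := (h.2.1 a b).symm
  rw [inf_eq_left.mpr hab] at this
  rw [← this]; exact inf_le_right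

lemma canExt_finset_inf (e : L → C) (h : IsCanonicalExtension e) (S : Finset L) :
    e (S.inf id) = S.inf e := by
  classical
  induction S using Finset.induction_on with
  | empty => simpa using h.2.2.2.2.1
  | insert a s hx ih => simp [Finset.inf_insert, h.2.1, ih]

lemma canExt_finset_sup (e : L → C) (h : IsCanonicalExtension e) (S : Finset L) :
    e (S.sup id) = S.sup e := by
  classical
  induction S using Finset.induction_on with
  | empty => simpa using h.2.2.2.1
  | insert a s hx ih => simp [Finset.sup_insert, h.2.2.1, ih]

/-- Transfer of inequalities between two canonical extensions. -/
lemma canExt_transfer (e : L → C) (e' : L → C')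
    (h : IsCanonicalExtension e) (h' : IsCanonicalExtension e')
    (S T : Set L) (hle : sInf (e '' S) ≤ sSup (e '' T)) :
    sInf (e' '' S) ≤ sSup (e' '' T) := by
  obtain ⟨S', T', hS', hT', hST⟩ := h.2.2.2.2.2.2 S T hle
  calc sInf (e' '' S) ≤ S'.inf e' :=
        Finset.le_inf fun x hx => sInf_le ⟨x, hS' hx, rfl⟩
    _ = e' (S'.inf id) := (canExt_finset_inf e' h' S').symm
    _ ≤ e' (T'.sup id) := canExt_mono e' h' hST
    _ = T'.sup e' := canExt_finset_sup e' h' T'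
    _ ≤ sSup (e' '' T) := Finset.sup_le fun x hx => le_sSup ⟨x, hT' hx, rfl⟩

/-- The canonical comparison map between two canonical extensions. -/
noncomputable def canExtMap (e : L → C) (e' : L → C') (u : C) : C' :=
  sSup {v : C' | ∃ S : Set L, v = sInf (e' '' S) ∧ sInf (e '' S) ≤ u}

omit [Lattice L] [BoundedOrder L] in
lemma canExtMap_mono (e : L → C) (e' : L → C') : Monotone (canExtMap e e') := by
  intro u v huv
  exact sSup_le fun x ⟨S, hx, hS⟩ => le_sSup ⟨S, hx, hS.trans huv⟩

lemma canExtMap_canExtMap (e : L → C) (e' : L → C')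
    (h : IsCanonicalExtension e) (h' : IsCanonicalExtension e') (u : C) :
    canExtMap e' e (canExtMap e e' u) = u := by
  apply le_antisymm
  · -- ≤ : use the meet-density of u
    apply sSup_le
    rintro x ⟨S, rfl, hS⟩
    -- hS : sInf (e' '' S) ≤ canExtMap e e' u ; show sInf (e '' S) ≤ u
    conv_rhs => rw [(h.2.2.2.2.2.1 u).2]
    apply le_sInf
    rintro w ⟨T, rfl, hT⟩
    -- show sInf (e '' S) ≤ sSup (e '' T), given u ≤ sSup (e '' T)
    apply canExt_transfer e' e h' h
    refine hS.trans (sSup_le ?_)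
    rintro y ⟨S₀, rfl, hS₀⟩
    exact canExt_transfer e e' h h' _ _ (hS₀.trans hT)
  · -- ≥ : use the join-density of u
    conv_lhs => rw [(h.2.2.2.2.2.1 u).1]
    apply sSup_le
    rintro x ⟨S, rfl, hS⟩
    exact le_sSup ⟨S, rfl, le_sSup ⟨S, rfl, hS⟩⟩

lemma canExtMap_apply_e (e : L → C) (e' : L → C')
    (h : IsCanonicalExtension e) (h' : IsCanonicalExtension e') (a : L) :
    canExtMap e e' (e a) = e' a := by
  apply le_antisymm
  · apply sSup_le
    rintro x ⟨S, rfl, hS⟩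
    have : sInf (e '' S) ≤ sSup (e '' {a}) := by simpa using hS
    have := canExt_transfer e e' h h' S {a} this
    simpa using this
  · refine le_sSup ⟨{a}, by simp, by simp⟩

end Aux

/-- Uniqueness of the canonical extension: any two canonical extensions of a bounded
lattice `L` are linked by a complete lattice (order) isomorphism commuting with the
embeddings. -/
theorem canonicalExtension_unique {L C C' : Type*} [Lattice L] [BoundedOrder L]
    [CompleteLattice C] [CompleteLattice C'] (e : L → C) (e' : L → C')
    (h : IsCanonicalExtension e) (h' : IsCanonicalExtension e') :
    ∃ φ : C ≃o C', ∀ a : L, φ (e a) = e' a := by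
  refine ⟨{ toFun := canExtMap e e'
            invFun := canExtMap e' e
            left_inv := canExtMap_canExtMap e e' h h'
            right_inv := canExtMap_canExtMap e' e h' h
            map_rel_iff' := ?_ }, fun a => canExtMap_apply_e e e' h h' a⟩
  intro u v
  constructor
  · intro huv
    have huv' : canExtMap e e' u ≤ canExtMap e e' v := huv
    have := canExtMap_mono e' e huv'
    rwa [canExtMap_canExtMap e e' h h', canExtMap_canExtMap e e' h h'] at this
  · exact fun huv => canExtMap_mono e e' huv
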